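/- Let ρ_τ(x) = x(τ − 1{x<0}) for τ ∈ (0,1), and let W ~ N(0, σ²) with σ² > 0. Then for any real ξ, E[ρ_τ(ξ − W)] = (τ−1)ξ + ξΦ(ξ; 0, σ²) + σ² φ(ξ; 0, σ²). -/

import Mathlib

open MeasureTheory ProbabilityTheory Real

/-- The `N(0, σ²)` density. -/
noncomputable def gpdf (s2 x : ℝ) : ℝ :=
  (Real.sqrt (2 * Real.pi * s2))⁻¹ * Real.exp (-(x ^ 2) / (2 * s2))

/-- The `N(0, σ²)` cumulative distribution function. -/
noncomputable def gcdf (s2 x : ℝ) : ℝ := ∫ t in Set.Iic x, gpdf s2 t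

/-- The quantile-regression check function `ρ_τ(x) = x(τ − 1{x<0})`. -/
noncomputable def checkFn (τ x : ℝ) : ℝ := x * (τ - if x < 0 then 1 else 0)

lemma gpdf_eq (s2 : ℝ) (hs2 : 0 < s2) :
    gpdf s2 = gaussianPDFReal 0 ⟨s2, hs2.le⟩ := by
  funext x
  simp [gpdf, gaussianPDFReal]
  rfl

lemma integrable_gpdf (s2 : ℝ) (hs2 : 0 < s2) : Integrable (gpdf s2) := by
  rw [gpdf_eq s2 hs2]; exact integrable_gaussianPDFReal 0 _

lemma integral_gpdf (s2 : ℝ) (hs2 : 0 < s2) : ∫ w, gpdf s2 w = 1 := by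
  rw [gpdf_eq s2 hs2]
  exact integral_gaussianPDFReal_eq_one 0 (fun hh => hs2.ne' (congrArg NNReal.toReal hh))

lemma integrable_id_gpdf (s2 : ℝ) (hs2 : 0 < s2) :
    Integrable (fun w => w * gpdf s2 w) := by
  have hb : (0:ℝ) < (2 * s2)⁻¹ := by positivity
  have h := (integrable_mul_exp_neg_mul_sq hb).const_mul (Real.sqrt (2 * Real.pi * s2))⁻¹
  refine h.congr (Filter.Eventually.of_forall fun x => ?_)
  unfold gpdf
  have harg : -(2 * s2)⁻¹ * x ^ 2 = -(x ^ 2) / (2 * s2) := by field_simp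
  simp only [harg]; ring

lemma integral_id_gpdf (s2 : ℝ) (hs2 : 0 < s2) : ∫ w, w * gpdf s2 w = 0 := by
  have h := integral_neg_eq_self (fun w => w * gpdf s2 w) (volume : Measure ℝ)
  have h2 : ∀ w : ℝ, (-w) * gpdf s2 (-w) = -(w * gpdf s2 w) := by
    intro w; unfold gpdf; rw [neg_sq]; ring
  simp only [h2, integral_neg] at h
  linarith

lemma integral_Ioi_id_gpdf (s2 : ℝ) (hs2 : 0 < s2) (ξ : ℝ) :
    ∫ w in Set.Ioi ξ, w * gpdf s2 w = s2 * gpdf s2 ξ := by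
  have hderiv : ∀ x ∈ Set.Ici ξ,
      HasDerivAt (fun w => -s2 * gpdf s2 w) (x * gpdf s2 x) x := by
    intro x _
    have h1 : HasDerivAt (fun w : ℝ => -(w ^ 2) / (2 * s2)) (-x / s2) x := by
      have := ((hasDerivAt_pow 2 x).neg).div_const (2 * s2)
      convert this using 1
      · rfl
      · rfl
      · rfl
      field_simp
      ring
    have h2 := (h1.exp).const_mul (-s2 * (Real.sqrt (2 * Real.pi * s2))⁻¹)
    convert h2 using 1
    · rfl
    · rfl
    · funext w; unfold gpdf; ring
    · unfold gpdf; field_simp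
  have htend : Filter.Tendsto (fun w => -s2 * gpdf s2 w) Filter.atTop (nhds 0) := by
    have h1 : Filter.Tendsto (fun w : ℝ => -(w ^ 2) / (2 * s2)) Filter.atTop Filter.atBot :=
      Filter.Tendsto.atBot_div_const (by positivity)
        (Filter.tendsto_neg_atTop_atBot.comp (Filter.tendsto_pow_atTop two_ne_zero))
    have h2 : Filter.Tendsto (fun w : ℝ => Real.exp (-(w ^ 2) / (2 * s2)))
        Filter.atTop (nhds 0) := Real.tendsto_exp_atBot.comp h1
    have h3 := h2.const_mul (-s2 * (Real.sqrt (2 * Real.pi * s2))⁻¹)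
    simp only [mul_zero] at h3
    refine h3.congr (fun w => ?_)
    unfold gpdf; ring
  have hint : IntegrableOn (fun w => w * gpdf s2 w) (Set.Ioi ξ) :=
    (integrable_id_gpdf s2 hs2).integrableOn
  have := integral_Ioi_of_hasDerivAt_of_tendsto' hderiv hint htend
  rw [this]; ring

/-- For `W ~ N(0, σ²)` with `σ² > 0` and `τ ∈ (0,1)`, for any real `ξ`,
`E[ρ_τ(ξ − W)] = (τ−1)ξ + ξΦ(ξ; 0, σ²) + σ² φ(ξ; 0, σ²)`. -/
theorem check_loss_gaussian (τ : ℝ) (hτ : τ ∈ Set.Ioo (0:ℝ) 1) (s2 : ℝ) (hs2 : 0 < s2)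
    (ξ : ℝ) :
    ∫ w : ℝ, checkFn τ (ξ - w) * gpdf s2 w
      = (τ - 1) * ξ + ξ * gcdf s2 ξ + s2 * gpdf s2 ξ := by
  have hg := integrable_gpdf s2 hs2
  have hwg := integrable_id_gpdf s2 hs2
  have hI : Integrable (fun w => (ξ - w) * gpdf s2 w) := by
    have := (hg.const_mul ξ).sub hwg
    refine this.congr (Filter.Eventually.of_forall fun w => ?_)
    simp only [Pi.sub_apply]; ring
  have hrw : ∀ w, checkFn τ (ξ - w) * gpdf s2 w
      = τ * ((ξ - w) * gpdf s2 w)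
        - Set.indicator (Set.Ioi ξ) (fun w => (ξ - w) * gpdf s2 w) w := by
    intro w
    by_cases h : w ∈ Set.Ioi ξ
    · have hlt : ξ - w < 0 := sub_neg.mpr h
      rw [Set.indicator_of_mem h]
      unfold checkFn
      rw [if_pos hlt]; ring
    · have hle : ¬ (ξ - w < 0) := by
        simp only [Set.mem_Ioi, not_lt] at h
        linarith
      rw [Set.indicator_of_notMem h]
      unfold checkFn
      rw [if_neg hle]; ring
  simp only [hrw]
  rw [integral_sub ((hI.const_mul τ)) (hI.indicator measurableSet_Ioi),
    integral_indicator measurableSet_Ioi, integral_const_mul]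
  have e1 : ∫ w, (ξ - w) * gpdf s2 w = ξ := by
    have : ∀ w, (ξ - w) * gpdf s2 w = ξ * gpdf s2 w - w * gpdf s2 w := fun w => by ring
    simp only [this]
    rw [integral_sub (hg.const_mul ξ) hwg, integral_const_mul, integral_gpdf s2 hs2,
      integral_id_gpdf s2 hs2]
    ring
  have e2 : ∫ w in Set.Ioi ξ, gpdf s2 w = 1 - gcdf s2 ξ := by
    have h := intervalIntegral.integral_Iic_add_Ioi (b := ξ) (μ := volume)
      hg.integrableOn hg.integrableOn
    rw [integral_gpdf s2 hs2] at h
    unfold gcdf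
    linarith
  have e3 : ∫ w in Set.Ioi ξ, (ξ - w) * gpdf s2 w
      = ξ * (1 - gcdf s2 ξ) - s2 * gpdf s2 ξ := by
    have : ∀ w, (ξ - w) * gpdf s2 w = ξ * gpdf s2 w - w * gpdf s2 w := fun w => by ring
    simp only [this]
    rw [integral_sub ((hg.const_mul ξ).integrableOn) (hwg.integrableOn),
      integral_const_mul, e2, integral_Ioi_id_gpdf s2 hs2 ξ]
  rw [e1, e3]
  ring
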